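/- There exists an integer L₀ (depending only on β) such that the following holds: if (p,q,r,s) is a bad quadruple with p, r ∈ P_K and q, s ∈ P_L, where K ≥ L, then |φ_p + φ_q − φ_r − φ_s| < 4·2^{−L²}; and if moreover L ≥ L₀, then (K−1)² + (L−1)² > β·(L−1)². -/

import Mathlib

/-- `m_p := ⌊2^{K_p²}·α·φ_p⌋`. -/
noncomputable def mfun (φ : ℕ → ℝ) (Kp : ℕ → ℕ) (α : ℝ) (p : ℕ) : ℕ :=
  ⌊(2 : ℝ) ^ ((Kp p) ^ 2) * α * φ p⌋₊

/-- `δ_{ip}`: the binary digit of `m_p` of weight `2^{K_p² − i}` (for `1 ≤ i ≤ K_p²`). -/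
noncomputable def dig (φ : ℕ → ℝ) (Kp : ℕ → ℕ) (α : ℝ) (i p : ℕ) : ℕ :=
  mfun φ Kp α p / 2 ^ ((Kp p) ^ 2 - i) % 2

/-- `Δ_{ip} := Σ_{j=(i−1)²+1}^{i²} δ_{jp}·2^{i²−j}` for `1 ≤ i ≤ K_p`, and `0` for `i > K_p`. -/
noncomputable def Blk (φ : ℕ → ℝ) (Kp : ℕ → ℕ) (α : ℝ) (i p : ℕ) : ℕ :=
  if i ≤ Kp p then ∑ j ∈ Finset.Icc ((i - 1) ^ 2 + 1) (i ^ 2), dig φ Kp α j p * 2 ^ (i ^ 2 - j)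
  else 0

/-- `t_p := 2^{K_p² + 3K_p + 2}`. -/
def tfun (Kp : ℕ → ℕ) (p : ℕ) : ℕ := 2 ^ ((Kp p) ^ 2 + 3 * Kp p + 2)

/-- `a_p := Σ_{i=1}^{K_p} Δ_{ip}·2^{(i−1)²+3i} + t_p`. -/
noncomputable def afun (φ : ℕ → ℝ) (Kp : ℕ → ℕ) (α : ℝ) (p : ℕ) : ℕ :=
  (∑ i ∈ Finset.Icc 1 (Kp p), Blk φ Kp α i p * 2 ^ ((i - 1) ^ 2 + 3 * i)) + tfun Kp p

/-- A quadruple `(p,q,r,s)` is bad (w.r.t. `α`) if `a_p + a_q = a_r + a_s` and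
`a_p > a_r ≥ a_s > a_q`. -/
noncomputable def IsBad (φ : ℕ → ℝ) (Kp : ℕ → ℕ) (α : ℝ) (p q r s : ℕ) : Prop :=
  afun φ Kp α p + afun φ Kp α q = afun φ Kp α r + afun φ Kp α s ∧
  afun φ Kp α r < afun φ Kp α p ∧ afun φ Kp α s ≤ afun φ Kp α r ∧ afun φ Kp α q < afun φ Kp α s

/-- The hypothesis defining `φ_p = (1/π)·arctan(v_p/u_p)` for primes `p ≡ 1 (mod 4)`,
where `p = u_p² + v_p²` with `u_p > v_p > 0`. -/
def PhiHyp (u v : ℕ → ℕ) (φ : ℕ → ℝ) : Prop :=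
  ∀ p : ℕ, p.Prime → p % 4 = 1 →
    0 < v p ∧ v p < u p ∧ p = (u p) ^ 2 + (v p) ^ 2 ∧
    φ p = (1 / Real.pi) * Real.arctan ((v p : ℝ) / (u p : ℝ))

/-- The hypothesis defining `K_p`: the unique integer `K > 2` with
`2^{(K−2)²} < p^β < 2^{(K−1)²}`, for primes `p ≡ 1 (mod 4)`. -/
def KpHyp (β : ℝ) (Kp : ℕ → ℕ) : Prop :=
  ∀ p : ℕ, p.Prime → p % 4 = 1 →
    2 < Kp p ∧ (2 : ℝ) ^ ((Kp p - 2) ^ 2) < (p : ℝ) ^ β ∧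
      (p : ℝ) ^ β < (2 : ℝ) ^ ((Kp p - 1) ^ 2)



lemma stmt8_geom (n : ℕ) : ∑ e ∈ Finset.range n, 2 ^ e < 2 ^ n := by
  induction n with
  | zero => simp
  | succ n ih => rw [Finset.sum_range_succ]; rw [pow_succ]; omega

lemma stmt8_digits_bot : ∀ (n m : ℕ), m < 2 ^ n →
    ∑ e ∈ Finset.range n, (m / 2 ^ e % 2) * 2 ^ e = m := by
  intro n
  induction n with
  | zero => intro m hm; interval_cases m <;> simp
  | succ n ih =>
    intro m hm
    rw [Finset.sum_range_succ]
    have h1 : ∀ e, e < n → m / 2 ^ e % 2 = (m % 2 ^ n) / 2 ^ e % 2 := by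
      intro e he
      conv_lhs => rw [← Nat.mod_add_div m (2 ^ n)]
      have h2n : (2:ℕ) ^ n = 2 ^ e * 2 ^ (n - e) := by
        rw [← pow_add]; congr 1; omega
      rw [h2n, mul_assoc, Nat.add_mul_div_left _ _ (Nat.two_pow_pos e)]
      have h3 : (2:ℕ) ^ (n - e) * (m / (2 ^ e * 2 ^ (n - e))) =
          2 * (2 ^ (n - e - 1) * (m / (2 ^ e * 2 ^ (n - e)))) := by
        rw [← mul_assoc]; congr 1
        rw [← pow_succ']; congr 1; omega
      rw [h3, Nat.add_mul_mod_self_left]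
    have hsum : ∑ e ∈ Finset.range n, (m / 2 ^ e % 2) * 2 ^ e
        = ∑ e ∈ Finset.range n, ((m % 2 ^ n) / 2 ^ e % 2) * 2 ^ e := by
      apply Finset.sum_congr rfl
      intro e he; rw [h1 e (Finset.mem_range.mp he)]
    rw [hsum, ih (m % 2 ^ n) (Nat.mod_lt _ (Nat.two_pow_pos n))]
    have hdiv : m / 2 ^ n % 2 = m / 2 ^ n := by
      apply Nat.mod_eq_of_lt
      apply Nat.div_lt_of_lt_mul
      rw [← pow_succ]; exact hm
    rw [hdiv]
    exact Nat.mod_add_div' m (2 ^ n)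

lemma stmt8_digits_top (n m : ℕ) (hm : m < 2 ^ n) :
    ∑ j ∈ Finset.Icc 1 n, (m / 2 ^ (n - j) % 2) * 2 ^ (n - j) = m := by
  conv_rhs => rw [← stmt8_digits_bot n m hm]
  apply Finset.sum_nbij' (fun j => n - j) (fun e => n - e)
  · intro j hj; simp only [Finset.mem_Icc] at hj; simp only [Finset.mem_range]; omega
  · intro e he; simp only [Finset.mem_range] at he; simp only [Finset.mem_Icc]; omega
  · intro j hj; simp only [Finset.mem_Icc] at hj; omega
  · intro e he; simp only [Finset.mem_range] at he; omega
  · intro j hj; rfl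

lemma stmt8_blocks (g : ℕ → ℕ) (K : ℕ) :
    ∑ i ∈ Finset.Icc 1 K, ∑ j ∈ Finset.Icc ((i - 1) ^ 2 + 1) (i ^ 2), g j
      = ∑ j ∈ Finset.Icc 1 (K ^ 2), g j := by
  induction K with
  | zero => simp
  | succ K ih =>
    rw [Finset.sum_Icc_succ_top (by omega : 1 ≤ K + 1), ih]
    have e1 : Finset.Icc 1 (K ^ 2) = Finset.Ioc 0 (K ^ 2) := by
      rw [← Finset.Icc_add_one_left_eq_Ioc]; rfl
    have e2 : Finset.Icc ((K + 1 - 1) ^ 2 + 1) ((K + 1) ^ 2)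
        = Finset.Ioc (K ^ 2) ((K + 1) ^ 2) := by
      have h : (K + 1 - 1) ^ 2 = K ^ 2 := by simp
      rw [h, ← Finset.Icc_add_one_left_eq_Ioc]
    have e3 : Finset.Icc 1 ((K + 1) ^ 2) = Finset.Ioc 0 ((K + 1) ^ 2) := by
      rw [← Finset.Icc_add_one_left_eq_Ioc]; rfl
    rw [e1, e2, e3]
    exact Finset.sum_Ioc_consecutive g (Nat.zero_le _) (Nat.pow_le_pow_left (by omega) 2)

lemma stmt8_sum_pow_sub (a b : ℕ) (hab : a ≤ b) :
    ∑ j ∈ Finset.Icc (a + 1) b, 2 ^ (b - j) < 2 ^ (b - a) := by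
  have : ∑ j ∈ Finset.Icc (a + 1) b, 2 ^ (b - j) = ∑ e ∈ Finset.range (b - a), 2 ^ e := by
    apply Finset.sum_nbij' (fun j => b - j) (fun e => b - e)
    · intro j hj; simp only [Finset.mem_Icc] at hj; simp only [Finset.mem_range]; omega
    · intro e he; simp only [Finset.mem_range] at he; simp only [Finset.mem_Icc]; omega
    · intro j hj; simp only [Finset.mem_Icc] at hj; omega
    · intro e he; simp only [Finset.mem_range] at he; omega
    · intro j hj; rfl
  rw [this]; exact stmt8_geom _

lemma stmt8_radix_bound (K : ℕ) (c : ℕ → ℕ) (h : ∀ i, 1 ≤ i → i ≤ K → c i < 2 ^ (2 * i)) :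
    ∑ i ∈ Finset.Icc 1 K, c i * 2 ^ ((i - 1) ^ 2 + 3 * i) < 2 ^ (K ^ 2 + 3 * K + 2) := by
  induction K with
  | zero => simp
  | succ K ih =>
    rw [Finset.sum_Icc_succ_top (by omega : 1 ≤ K + 1)]
    have h1 : ∑ i ∈ Finset.Icc 1 K, c i * 2 ^ ((i - 1) ^ 2 + 3 * i) < 2 ^ (K ^ 2 + 3 * K + 2) :=
      ih (fun i h1 h2 => h i h1 (by omega))
    have h2 : c (K + 1) * 2 ^ ((K + 1 - 1) ^ 2 + 3 * (K + 1)) < 2 ^ (K ^ 2 + 5 * K + 5) := by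
      have hc := h (K + 1) (by omega) le_rfl
      have e1 : (K + 1 - 1) ^ 2 + 3 * (K + 1) = K ^ 2 + 3 * K + 3 := by
        simp only [Nat.add_sub_cancel]; ring
      rw [e1]
      calc c (K + 1) * 2 ^ (K ^ 2 + 3 * K + 3) < 2 ^ (2 * (K + 1)) * 2 ^ (K ^ 2 + 3 * K + 3) := by
            exact mul_lt_mul_of_pos_right hc (by positivity)
        _ = 2 ^ (K ^ 2 + 5 * K + 5) := by rw [← pow_add]; congr 1; ring
    have e2 : (K + 1) ^ 2 + 3 * (K + 1) + 2 = K ^ 2 + 5 * K + 6 := by ring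
    rw [e2]
    have h3 : (2:ℕ) ^ (K ^ 2 + 3 * K + 2) ≤ 2 ^ (K ^ 2 + 5 * K + 5) :=
      Nat.pow_le_pow_right (by norm_num) (by omega)
    have h4 : (2:ℕ) ^ (K ^ 2 + 5 * K + 5) + 2 ^ (K ^ 2 + 5 * K + 5) = 2 ^ (K ^ 2 + 5 * K + 6) := by
      rw [← two_mul, ← pow_succ']
    omega

lemma stmt8_radix_unique : ∀ (K : ℕ) (c d : ℕ → ℕ),
    (∀ i, 1 ≤ i → i ≤ K → c i < 2 ^ (2 * i)) →
    (∀ i, 1 ≤ i → i ≤ K → d i < 2 ^ (2 * i)) →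
    (∑ i ∈ Finset.Icc 1 K, c i * 2 ^ ((i - 1) ^ 2 + 3 * i))
      = (∑ i ∈ Finset.Icc 1 K, d i * 2 ^ ((i - 1) ^ 2 + 3 * i)) →
    ∀ i, 1 ≤ i → i ≤ K → c i = d i := by
  intro K
  induction K with
  | zero => intro c d hc hd heq i h1 h2; omega
  | succ K ih =>
    intro c d hc hd heq i h1 h2
    rw [Finset.sum_Icc_succ_top (by omega : 1 ≤ K + 1),
        Finset.sum_Icc_succ_top (by omega : 1 ≤ K + 1)] at heq
    have hbc := stmt8_radix_bound K c (fun i h1 h2 => hc i h1 (by omega))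
    have hbd := stmt8_radix_bound K d (fun i h1 h2 => hd i h1 (by omega))
    have hw : (2:ℕ) ^ (K ^ 2 + 3 * K + 2) ∣ 2 ^ ((K + 1 - 1) ^ 2 + 3 * (K + 1)) := by
      apply pow_dvd_pow; simp only [Nat.add_sub_cancel]; omega
    obtain ⟨w2, hw2⟩ := hw
    rw [hw2] at heq
    have hK1 : c (K + 1) = d (K + 1) ∧
        (∑ i ∈ Finset.Icc 1 K, c i * 2 ^ ((i - 1) ^ 2 + 3 * i))
          = ∑ i ∈ Finset.Icc 1 K, d i * 2 ^ ((i - 1) ^ 2 + 3 * i) := by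
      constructor
      · have := Nat.add_mul_div_left
        -- derive from heq by div/mod reasoning
        have h2pos : 0 < (2:ℕ) ^ (K ^ 2 + 3 * K + 2) := by positivity
        have hmod : ∀ (S e : ℕ), S < 2 ^ (K ^ 2 + 3 * K + 2) →
            (S + e * (2 ^ (K ^ 2 + 3 * K + 2) * w2)) / 2 ^ (K ^ 2 + 3 * K + 2) = e * w2 := by
          intro S e hS
          rw [← mul_assoc, mul_comm e, mul_assoc, Nat.add_mul_div_left _ _ h2pos,
              Nat.div_eq_of_lt hS, zero_add]
        have hcm := hmod _ (c (K + 1)) hbc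
        have hdm := hmod _ (d (K + 1)) hbd
        have hw2pos : 0 < w2 := by
          by_contra h
          have : w2 = 0 := by omega
          rw [this, mul_zero] at hw2
          exact absurd hw2 (by positivity)
        have : c (K + 1) * w2 = d (K + 1) * w2 := by rw [← hcm, ← hdm, heq]
        exact Nat.eq_of_mul_eq_mul_right hw2pos this
      · have h2pos : 0 < (2:ℕ) ^ (K ^ 2 + 3 * K + 2) := by positivity
        have hmod : ∀ (S e : ℕ), S < 2 ^ (K ^ 2 + 3 * K + 2) →
            (S + e * (2 ^ (K ^ 2 + 3 * K + 2) * w2)) % 2 ^ (K ^ 2 + 3 * K + 2) = S := by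
          intro S e hS
          rw [← mul_assoc, mul_comm e, mul_assoc, Nat.add_mul_mod_self_left,
              Nat.mod_eq_of_lt hS]
        have hcm := hmod _ (c (K + 1)) hbc
        have hdm := hmod _ (d (K + 1)) hbd
        rw [← hcm, ← hdm, heq]
    rcases Nat.lt_or_ge i (K + 1) with hi | hi
    · exact ih c d (fun i h1 h2 => hc i h1 (by omega)) (fun i h1 h2 => hd i h1 (by omega))
        hK1.2 i h1 (by omega)
    · have : i = K + 1 := by omega
      rw [this]; exact hK1.1

section
variable (φ : ℕ → ℝ) (Kp : ℕ → ℕ) (α : ℝ)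

lemma stmt8_mfun_lt (p : ℕ) (hφ0 : 0 ≤ φ p) (hφ1 : φ p < 1 / 4)
    (hα0 : 1 ≤ α) (hα2 : α < 2) : mfun φ Kp α p < 2 ^ ((Kp p) ^ 2) := by
  rw [mfun, Nat.floor_lt (by positivity)]
  have h2 : (0:ℝ) < 2 ^ ((Kp p) ^ 2) := by positivity
  push_cast
  have hx : α * φ p < 1 := by nlinarith
  calc (2:ℝ) ^ ((Kp p) ^ 2) * α * φ p = 2 ^ ((Kp p) ^ 2) * (α * φ p) := by ring
    _ < 2 ^ ((Kp p) ^ 2) * 1 := mul_lt_mul_of_pos_left hx h2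
    _ = 2 ^ ((Kp p) ^ 2) := mul_one _

lemma stmt8_mfun_expand (p : ℕ) (hm : mfun φ Kp α p < 2 ^ ((Kp p) ^ 2)) :
    mfun φ Kp α p = ∑ i ∈ Finset.Icc 1 (Kp p),
      Blk φ Kp α i p * 2 ^ ((Kp p) ^ 2 - i ^ 2) := by
  conv_lhs => rw [← stmt8_digits_top ((Kp p) ^ 2) (mfun φ Kp α p) hm]
  rw [← stmt8_blocks (fun j => (mfun φ Kp α p / 2 ^ ((Kp p) ^ 2 - j) % 2) * 2 ^ ((Kp p) ^ 2 - j))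
    (Kp p)]
  apply Finset.sum_congr rfl
  intro i hi
  simp only [Finset.mem_Icc] at hi
  rw [Blk, if_pos hi.2, Finset.sum_mul]
  apply Finset.sum_congr rfl
  intro j hj
  simp only [Finset.mem_Icc] at hj
  have hi2 : i ^ 2 ≤ (Kp p) ^ 2 := Nat.pow_le_pow_left hi.2 2
  have hij : j ≤ i ^ 2 := hj.2
  rw [mul_assoc, ← pow_add, dig]
  congr 2
  omega

lemma stmt8_Blk_lt (i p : ℕ) (hi : 1 ≤ i) : Blk φ Kp α i p < 2 ^ (2 * i - 1) := by
  rw [Blk]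
  by_cases h : i ≤ Kp p
  · rw [if_pos h]
    obtain ⟨k, rfl⟩ := Nat.exists_eq_add_of_le hi
    have key := stmt8_sum_pow_sub ((1 + k - 1) ^ 2) ((1 + k) ^ 2)
      (Nat.pow_le_pow_left (by omega) 2)
    have e1 : (1 + k) ^ 2 - (1 + k - 1) ^ 2 = 2 * (1 + k) - 1 := by
      simp only [Nat.add_sub_cancel_left]
      have : (1 + k) ^ 2 = k ^ 2 + (2 * k + 1) := by ring
      omega
    rw [e1] at key
    refine lt_of_le_of_lt ?_ key
    apply Finset.sum_le_sum
    intro j hj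
    have : dig φ Kp α j p ≤ 1 := Nat.lt_succ_iff.mp (Nat.mod_lt _ (by norm_num))
    calc dig φ Kp α j p * 2 ^ ((1 + k) ^ 2 - j) ≤ 1 * 2 ^ ((1 + k) ^ 2 - j) :=
          Nat.mul_le_mul_right _ this
      _ = 2 ^ ((1 + k) ^ 2 - j) := one_mul _
  · rw [if_neg h]; positivity

end

section
variable (φ : ℕ → ℝ) (Kp : ℕ → ℕ) (α : ℝ)

lemma stmt8_sum_ext (p K : ℕ) (hK : Kp p ≤ K) (w : ℕ → ℕ) :
    ∑ i ∈ Finset.Icc 1 (Kp p), Blk φ Kp α i p * w i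
      = ∑ i ∈ Finset.Icc 1 K, Blk φ Kp α i p * w i := by
  apply Finset.sum_subset (Finset.Icc_subset_Icc_right hK)
  intro i hiK hniL
  simp only [Finset.mem_Icc] at hiK hniL
  have h : ¬ i ≤ Kp p := by omega
  rw [Blk, if_neg h, zero_mul]

lemma stmt8_blocks_eq (p q r s K L : ℕ) (hpK : Kp p = K) (hrK : Kp r = K)
    (hqL : Kp q = L) (hsL : Kp s = L) (hLK : L ≤ K)
    (heq : afun φ Kp α p + afun φ Kp α q = afun φ Kp α r + afun φ Kp α s) :
    ∀ i, 1 ≤ i → i ≤ K → Blk φ Kp α i p + Blk φ Kp α i q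
      = Blk φ Kp α i r + Blk φ Kp α i s := by
  have hq := stmt8_sum_ext φ Kp α q K (by omega) (fun i => 2 ^ ((i - 1) ^ 2 + 3 * i))
  have hs := stmt8_sum_ext φ Kp α s K (by omega) (fun i => 2 ^ ((i - 1) ^ 2 + 3 * i))
  rw [hqL] at hq
  rw [hsL] at hs
  simp only [afun, tfun, hpK, hrK, hqL, hsL] at heq
  rw [hq, hs] at heq
  have hsum : (∑ i ∈ Finset.Icc 1 K, (Blk φ Kp α i p + Blk φ Kp α i q) * 2 ^ ((i - 1) ^ 2 + 3 * i))
      = ∑ i ∈ Finset.Icc 1 K, (Blk φ Kp α i r + Blk φ Kp α i s) * 2 ^ ((i - 1) ^ 2 + 3 * i) := by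
    simp only [add_mul, Finset.sum_add_distrib]
    omega
  intro i h1 h2
  have hc : ∀ x : ℕ, ∀ i, 1 ≤ i → i ≤ K →
      Blk φ Kp α i x + Blk φ Kp α i x < 2 ^ (2 * i) := by
    intro x i h1 h2
    have := stmt8_Blk_lt φ Kp α i x h1
    have e : (2:ℕ) ^ (2 * i) = 2 ^ (2 * i - 1) + 2 ^ (2 * i - 1) := by
      rw [← two_mul, ← pow_succ']
      congr 1; omega
    omega
  apply stmt8_radix_unique K _ _ ?_ ?_ hsum i h1 h2
  · intro i h1 h2
    have hp := stmt8_Blk_lt φ Kp α i p h1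
    have hq := stmt8_Blk_lt φ Kp α i q h1
    have e : (2:ℕ) ^ (2 * i) = 2 ^ (2 * i - 1) + 2 ^ (2 * i - 1) := by
      rw [← two_mul, ← pow_succ']; congr 1; omega
    omega
  · intro i h1 h2
    have hr := stmt8_Blk_lt φ Kp α i r h1
    have hs := stmt8_Blk_lt φ Kp α i s h1
    have e : (2:ℕ) ^ (2 * i) = 2 ^ (2 * i - 1) + 2 ^ (2 * i - 1) := by
      rw [← two_mul, ← pow_succ']; congr 1; omega
    omega

lemma stmt8_shift (q K L : ℕ) (hqL : Kp q = L) (hLK : L ≤ K)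
    (hmq : mfun φ Kp α q < 2 ^ ((Kp q) ^ 2)) :
    mfun φ Kp α q * 2 ^ (K ^ 2 - L ^ 2)
      = ∑ i ∈ Finset.Icc 1 K, Blk φ Kp α i q * 2 ^ (K ^ 2 - i ^ 2) := by
  have eq := stmt8_mfun_expand φ Kp α q hmq
  rw [hqL] at eq
  rw [eq, Finset.sum_mul]
  have step : ∀ i ∈ Finset.Icc 1 L,
      Blk φ Kp α i q * 2 ^ (L ^ 2 - i ^ 2) * 2 ^ (K ^ 2 - L ^ 2)
        = Blk φ Kp α i q * 2 ^ (K ^ 2 - i ^ 2) := by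
    intro i hi
    simp only [Finset.mem_Icc] at hi
    have h1 : i ^ 2 ≤ L ^ 2 := Nat.pow_le_pow_left hi.2 2
    have h2 : L ^ 2 ≤ K ^ 2 := Nat.pow_le_pow_left hLK 2
    rw [mul_assoc, ← pow_add]
    congr 2
    omega
  rw [Finset.sum_congr rfl step]
  have := stmt8_sum_ext φ Kp α q K (by omega) (fun i => 2 ^ (K ^ 2 - i ^ 2))
  rw [hqL] at this
  exact this

lemma stmt8_m_identity (p q r s K L : ℕ) (hpK : Kp p = K) (hrK : Kp r = K)
    (hqL : Kp q = L) (hsL : Kp s = L) (hLK : L ≤ K)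
    (hmp : mfun φ Kp α p < 2 ^ ((Kp p) ^ 2)) (hmq : mfun φ Kp α q < 2 ^ ((Kp q) ^ 2))
    (hmr : mfun φ Kp α r < 2 ^ ((Kp r) ^ 2)) (hms : mfun φ Kp α s < 2 ^ ((Kp s) ^ 2))
    (hblk : ∀ i, 1 ≤ i → i ≤ K → Blk φ Kp α i p + Blk φ Kp α i q
      = Blk φ Kp α i r + Blk φ Kp α i s) :
    mfun φ Kp α p + mfun φ Kp α q * 2 ^ (K ^ 2 - L ^ 2)
      = mfun φ Kp α r + mfun φ Kp α s * 2 ^ (K ^ 2 - L ^ 2) := by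
  have hp := stmt8_shift φ Kp α p K K hpK le_rfl hmp
  have hr' := stmt8_shift φ Kp α r K K hrK le_rfl hmr
  have hq := stmt8_shift φ Kp α q K L hqL hLK hmq
  have hs := stmt8_shift φ Kp α s K L hsL hLK hms
  have hKK : K ^ 2 - K ^ 2 = 0 := by omega
  rw [hKK, pow_zero, mul_one] at hp hr'
  rw [hp, hq, hr', hs, ← Finset.sum_add_distrib, ← Finset.sum_add_distrib]
  apply Finset.sum_congr rfl
  intro i hi
  simp only [Finset.mem_Icc] at hi
  rw [← add_mul, ← add_mul, hblk i hi.1 hi.2]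

end

section
variable (φ : ℕ → ℝ) (Kp : ℕ → ℕ) (α : ℝ)

lemma stmt8_floor_bounds (p M : ℕ) (hpM : Kp p = M) (hφ : 0 ≤ φ p) (hα : 1 ≤ α) :
    (mfun φ Kp α p : ℝ) ≤ 2 ^ (M ^ 2) * α * φ p ∧
      2 ^ (M ^ 2) * α * φ p < mfun φ Kp α p + 1 := by
  have h : mfun φ Kp α p = ⌊(2:ℝ) ^ (M ^ 2) * α * φ p⌋₊ := by rw [mfun, hpM]
  constructor
  · rw [h]
    exact Nat.floor_le (by positivity)
  · rw [h]
    exact Nat.lt_floor_add_one _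

lemma stmt8_part1 (p q r s K L : ℕ) (hα : 1 ≤ α)
    (hpK : Kp p = K) (hrK : Kp r = K) (hqL : Kp q = L) (hsL : Kp s = L) (hLK : L ≤ K)
    (hφp : 0 ≤ φ p) (hφq : 0 ≤ φ q) (hφr : 0 ≤ φ r) (hφs : 0 ≤ φ s)
    (hid : mfun φ Kp α p + mfun φ Kp α q * 2 ^ (K ^ 2 - L ^ 2)
      = mfun φ Kp α r + mfun φ Kp α s * 2 ^ (K ^ 2 - L ^ 2)) :
    |φ p + φ q - φ r - φ s| < 2 * ((2:ℝ) ^ (L ^ 2))⁻¹ := by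
  obtain ⟨cK, hcK⟩ : ∃ x : ℝ, x = 2 ^ (K ^ 2) := ⟨_, rfl⟩
  obtain ⟨cL, hcL⟩ : ∃ x : ℝ, x = 2 ^ (L ^ 2) := ⟨_, rfl⟩
  obtain ⟨X, hX⟩ : ∃ x : ℝ, x = 2 ^ (K ^ 2 - L ^ 2) := ⟨_, rfl⟩
  have hcKpos : (0:ℝ) < cK := by rw [hcK]; positivity
  have hcLpos : (0:ℝ) < cL := by rw [hcL]; positivity
  have hcLK : cL ≤ cK := by
    rw [hcK, hcL]
    exact pow_le_pow_right₀ (by norm_num) (Nat.pow_le_pow_left hLK 2)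
  obtain ⟨hp1, hp2⟩ := stmt8_floor_bounds φ Kp α p K hpK hφp hα
  obtain ⟨hq1, hq2⟩ := stmt8_floor_bounds φ Kp α q L hqL hφq hα
  obtain ⟨hr1, hr2⟩ := stmt8_floor_bounds φ Kp α r K hrK hφr hα
  obtain ⟨hs1, hs2⟩ := stmt8_floor_bounds φ Kp α s L hsL hφs hα
  rw [← hcK] at hp1 hp2 hr1 hr2
  rw [← hcL] at hq1 hq2 hs1 hs2
  have hcast : (mfun φ Kp α p : ℝ) + (mfun φ Kp α q : ℝ) * X
      = (mfun φ Kp α r : ℝ) + (mfun φ Kp α s : ℝ) * X := by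
    rw [hX]; exact_mod_cast hid
  have hpow : X * cL = cK := by
    rw [hX, hcL, hcK, ← pow_add]
    congr 1
    have := Nat.pow_le_pow_left hLK 2
    omega
  have hz : cL * (mfun φ Kp α p : ℝ) + cK * (mfun φ Kp α q : ℝ)
      = cL * (mfun φ Kp α r : ℝ) + cK * (mfun φ Kp α s : ℝ) := by
    linear_combination cL * hcast + ((mfun φ Kp α s : ℝ) - (mfun φ Kp α q : ℝ)) * hpow
  have key : α * (cK * cL) * (φ p + φ q - φ r - φ s)
      = cL * (cK * α * φ p - mfun φ Kp α p) + cK * (cL * α * φ q - mfun φ Kp α q)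
        - cL * (cK * α * φ r - mfun φ Kp α r) - cK * (cL * α * φ s - mfun φ Kp α s) := by
    linear_combination hz
  have b1 : cL * (cK * α * φ p - (mfun φ Kp α p : ℝ)) < cL := by
    have h : cK * α * φ p - (mfun φ Kp α p : ℝ) < 1 := by linarith
    calc cL * (cK * α * φ p - (mfun φ Kp α p : ℝ)) < cL * 1 :=
          mul_lt_mul_of_pos_left h hcLpos
      _ = cL := mul_one cL
  have b1' : 0 ≤ cL * (cK * α * φ p - (mfun φ Kp α p : ℝ)) :=
    mul_nonneg hcLpos.le (sub_nonneg.mpr hp1)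
  have b2 : cK * (cL * α * φ q - (mfun φ Kp α q : ℝ)) < cK := by
    have h : cL * α * φ q - (mfun φ Kp α q : ℝ) < 1 := by linarith
    calc cK * (cL * α * φ q - (mfun φ Kp α q : ℝ)) < cK * 1 :=
          mul_lt_mul_of_pos_left h hcKpos
      _ = cK := mul_one cK
  have b2' : 0 ≤ cK * (cL * α * φ q - (mfun φ Kp α q : ℝ)) :=
    mul_nonneg hcKpos.le (sub_nonneg.mpr hq1)
  have b3 : cL * (cK * α * φ r - (mfun φ Kp α r : ℝ)) < cL := by
    have h : cK * α * φ r - (mfun φ Kp α r : ℝ) < 1 := by linarith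
    calc cL * (cK * α * φ r - (mfun φ Kp α r : ℝ)) < cL * 1 :=
          mul_lt_mul_of_pos_left h hcLpos
      _ = cL := mul_one cL
  have b3' : 0 ≤ cL * (cK * α * φ r - (mfun φ Kp α r : ℝ)) :=
    mul_nonneg hcLpos.le (sub_nonneg.mpr hr1)
  have b4 : cK * (cL * α * φ s - (mfun φ Kp α s : ℝ)) < cK := by
    have h : cL * α * φ s - (mfun φ Kp α s : ℝ) < 1 := by linarith
    calc cK * (cL * α * φ s - (mfun φ Kp α s : ℝ)) < cK * 1 :=
          mul_lt_mul_of_pos_left h hcKpos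
      _ = cK := mul_one cK
  have b4' : 0 ≤ cK * (cL * α * φ s - (mfun φ Kp α s : ℝ)) :=
    mul_nonneg hcKpos.le (sub_nonneg.mpr hs1)
  have habs : |α * (cK * cL) * (φ p + φ q - φ r - φ s)| < cL + cK := by
    rw [abs_lt]
    constructor
    · rw [key]; linarith
    · rw [key]; linarith
  have hαpos : (0:ℝ) < α := by linarith
  have hTabs : α * (cK * cL) * |φ p + φ q - φ r - φ s| < cL + cK := by
    calc α * (cK * cL) * |φ p + φ q - φ r - φ s|
        = |α * (cK * cL) * (φ p + φ q - φ r - φ s)| := by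
          rw [abs_mul, abs_of_pos (mul_pos hαpos (mul_pos hcKpos hcLpos))]
      _ < cL + cK := habs
  have hfin : cK * cL * |φ p + φ q - φ r - φ s| < 2 * cK := by
    have h1 : cK * cL * |φ p + φ q - φ r - φ s| ≤ α * (cK * cL) * |φ p + φ q - φ r - φ s| := by
      have := mul_le_mul_of_nonneg_right
        (mul_le_mul_of_nonneg_right hα (mul_pos hcKpos hcLpos).le) (abs_nonneg (φ p + φ q - φ r - φ s))
      calc cK * cL * |φ p + φ q - φ r - φ s| = 1 * (cK * cL) * |φ p + φ q - φ r - φ s| := by ring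
        _ ≤ α * (cK * cL) * |φ p + φ q - φ r - φ s| := this
    linarith
  rw [← hcL, show 2 * (cL)⁻¹ = 2 * cK / (cK * cL) by field_simp]
  rw [lt_div_iff₀ (by positivity)]
  calc |φ p + φ q - φ r - φ s| * (cK * cL) = cK * cL * |φ p + φ q - φ r - φ s| := by ring
    _ < 2 * cK := hfin

end


open Complex

lemma stmt8_arg_fact (a b : ℕ) (ha : 0 < a) :
    Complex.arg ((⟨(a:ℤ), (b:ℤ)⟩ : GaussianInt) : ℂ) = Real.arctan ((b:ℝ) / (a:ℝ)) := by
  set z : ℂ := ((⟨(a:ℤ), (b:ℤ)⟩ : GaussianInt) : ℂ) with hz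
  have hre : z.re = (a:ℝ) := by rw [hz, GaussianInt.toComplex_def]; push_cast; simp
  have him : z.im = (b:ℝ) := by rw [hz, GaussianInt.toComplex_def]; push_cast; simp
  have hrepos : 0 < z.re := by rw [hre]; exact_mod_cast ha
  have habs : |Complex.arg z| < Real.pi / 2 :=
    Complex.abs_arg_lt_pi_div_two_iff.mpr (Or.inl hrepos)
  rw [abs_lt] at habs
  have := Real.arctan_tan habs.1 habs.2
  rw [Complex.tan_arg, hre, him] at this
  exact this.symm

lemma stmt8_abs_fact (a b n : ℕ) (hn : n = a ^ 2 + b ^ 2) :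
    ‖((⟨(a:ℤ), (b:ℤ)⟩ : GaussianInt) : ℂ)‖ = Real.sqrt n := by
  rw [Complex.norm_def]
  congr 1
  rw [← GaussianInt.intCast_real_norm, Zsqrtd.norm_def]
  push_cast [hn]
  ring

lemma stmt8_ne_zero_fact (a b : ℕ) (ha : 0 < a) :
    ((⟨(a:ℤ), (b:ℤ)⟩ : GaussianInt) : ℂ) ≠ 0 := by
  intro h
  have := congrArg Complex.re h
  rw [GaussianInt.toComplex_def] at this
  simp at this
  omega

lemma stmt8_norm_fact (a b n : ℕ) (hn : n = a ^ 2 + b ^ 2) :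
    Zsqrtd.norm (⟨(a:ℤ), (b:ℤ)⟩ : GaussianInt) = (n:ℤ) := by
  rw [Zsqrtd.norm_def, hn]
  push_cast
  ring

lemma stmt8_norm_star (x : GaussianInt) : Zsqrtd.norm (star x) = Zsqrtd.norm x := by
  rw [Zsqrtd.norm_def, Zsqrtd.norm_def, Zsqrtd.re_star, Zsqrtd.im_star]
  ring

lemma stmt8_sqrt_lt (β : ℝ) (hβ : 0 < β) (x n : ℕ) (hx : 1 ≤ x)
    (h : (x:ℝ) ^ β < 2 ^ n) : Real.sqrt x < (2:ℝ) ^ ((n:ℝ) / (2 * β)) := by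
  have hx0 : (0:ℝ) ≤ x := by positivity
  have hβne : β ≠ 0 := ne_of_gt hβ
  have hpow : ((2:ℝ) ^ n) = (2:ℝ) ^ ((n:ℝ)) := by rw [Real.rpow_natCast]
  rw [hpow] at h
  have h1 : ((x:ℝ) ^ β) ^ ((1:ℝ) / (2 * β)) < ((2:ℝ) ^ ((n:ℝ))) ^ ((1:ℝ) / (2 * β)) :=
    Real.rpow_lt_rpow (Real.rpow_nonneg hx0 β) h (by positivity)
  rw [← Real.rpow_mul hx0, ← Real.rpow_mul (by norm_num : (0:ℝ) ≤ 2)] at h1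
  have e1 : β * ((1:ℝ) / (2 * β)) = 1 / 2 := by field_simp
  have e2 : (n:ℝ) * ((1:ℝ) / (2 * β)) = (n:ℝ) / (2 * β) := by ring
  rw [e1, e2] at h1
  rw [Real.sqrt_eq_rpow]
  exact h1

lemma stmt8_angle (z1 z2 z3 z4 : ℂ) (h1 : z1 ≠ 0) (h2 : z2 ≠ 0) (h3 : z3 ≠ 0) (h4 : z4 ≠ 0) :
    ((Complex.arg z1 + Complex.arg z2 - Complex.arg z3 - Complex.arg z4 : ℝ) : Real.Angle)
      = (Complex.arg (z1 * z2 * (starRingEnd ℂ) z3 * (starRingEnd ℂ) z4) : Real.Angle) := by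
  have hc3 : (starRingEnd ℂ) z3 ≠ 0 := by simpa using h3
  have hc4 : (starRingEnd ℂ) z4 ≠ 0 := by simpa using h4
  have h12 : z1 * z2 ≠ 0 := mul_ne_zero h1 h2
  have h123 : z1 * z2 * (starRingEnd ℂ) z3 ≠ 0 := mul_ne_zero h12 hc3
  rw [Complex.arg_mul_coe_angle h123 hc4, Complex.arg_mul_coe_angle h12 hc3,
    Complex.arg_mul_coe_angle h1 h2, Complex.arg_conj_coe_angle, Complex.arg_conj_coe_angle]
  push_cast [Real.Angle.coe_sub, Real.Angle.coe_add]
  abel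


set_option maxHeartbeats 1000000 in
lemma stmt8_part2core (β : ℝ) (hβ : 2 < β) (u v : ℕ → ℕ) (φ : ℕ → ℝ) (hPhi : PhiHyp u v φ)
    (p q r s K L : ℕ)
    (hp : p.Prime) (hp4 : p % 4 = 1) (hq : q.Prime) (hq4 : q % 4 = 1)
    (hr : r.Prime) (hr4 : r % 4 = 1) (hs : s.Prime) (hs4 : s % 4 = 1)
    (hL3 : 3 ≤ L)
    (hKb : (p:ℝ) ^ β < 2 ^ ((K - 1) ^ 2)) (hrb : (r:ℝ) ^ β < 2 ^ ((K - 1) ^ 2))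
    (hqb : (q:ℝ) ^ β < 2 ^ ((L - 1) ^ 2)) (hsb : (s:ℝ) ^ β < 2 ^ ((L - 1) ^ 2))
    (hK1 : 1 ≤ K)
    (hpr : p ≠ r) (hps : p ≠ s) (hqr : q ≠ r) (hqs : q ≠ s)
    (hT : |φ p + φ q - φ r - φ s| < 2 * ((2:ℝ) ^ (L ^ 2))⁻¹) :
    β * ((L:ℝ) - 1) ^ 2 < ((K:ℝ) - 1) ^ 2 + ((L:ℝ) - 1) ^ 2 := by
  have hπ := Real.pi_pos
  obtain ⟨hvp, huvp, hpeq, hφp⟩ := hPhi p hp hp4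
  obtain ⟨hvq, huvq, hqeq, hφq⟩ := hPhi q hq hq4
  obtain ⟨hvr, huvr, hreq, hφr⟩ := hPhi r hr hr4
  obtain ⟨hvs, huvs, hseq, hφs⟩ := hPhi s hs hs4
  have hup : 0 < u p := by omega
  have huq : 0 < u q := by omega
  have hur : 0 < u r := by omega
  have hus : 0 < u s := by omega
  set T : ℝ := φ p + φ q - φ r - φ s with hTdef
  set w1 : GaussianInt := ⟨(u p : ℤ), (v p : ℤ)⟩ with hw1
  set w2 : GaussianInt := ⟨(u q : ℤ), (v q : ℤ)⟩ with hw2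
  set w3 : GaussianInt := ⟨(u r : ℤ), (v r : ℤ)⟩ with hw3
  set w4 : GaussianInt := ⟨(u s : ℤ), (v s : ℤ)⟩ with hw4
  set w : GaussianInt := w1 * w2 * star w3 * star w4 with hw
  have hz : (w : ℂ) = (w1:ℂ) * (w2:ℂ) * (starRingEnd ℂ) (w3:ℂ) * (starRingEnd ℂ) (w4:ℂ) := by
    rw [hw, GaussianInt.toComplex_mul, GaussianInt.toComplex_mul, GaussianInt.toComplex_mul,
      GaussianInt.toComplex_star, GaussianInt.toComplex_star]
  have hne1 : (w1:ℂ) ≠ 0 := stmt8_ne_zero_fact (u p) (v p) hup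
  have hne2 : (w2:ℂ) ≠ 0 := stmt8_ne_zero_fact (u q) (v q) huq
  have hne3 : (w3:ℂ) ≠ 0 := stmt8_ne_zero_fact (u r) (v r) hur
  have hne4 : (w4:ℂ) ≠ 0 := stmt8_ne_zero_fact (u s) (v s) hus
  have hwne : (w:ℂ) ≠ 0 := by
    rw [hz]
    exact mul_ne_zero (mul_ne_zero (mul_ne_zero hne1 hne2) (by simpa using hne3))
      (by simpa using hne4)
  have harg1 : Real.pi * φ p = Complex.arg (w1 : ℂ) := by
    rw [hw1, stmt8_arg_fact (u p) (v p) hup, hφp]; field_simp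
  have harg2 : Real.pi * φ q = Complex.arg (w2 : ℂ) := by
    rw [hw2, stmt8_arg_fact (u q) (v q) huq, hφq]; field_simp
  have harg3 : Real.pi * φ r = Complex.arg (w3 : ℂ) := by
    rw [hw3, stmt8_arg_fact (u r) (v r) hur, hφr]; field_simp
  have harg4 : Real.pi * φ s = Complex.arg (w4 : ℂ) := by
    rw [hw4, stmt8_arg_fact (u s) (v s) hus, hφs]; field_simp
  have hangle : ((Real.pi * T : ℝ) : Real.Angle) = (Complex.arg (w:ℂ) : Real.Angle) := by
    rw [hz, ← stmt8_angle _ _ _ _ hne1 hne2 hne3 hne4]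
    congr 1
    rw [← harg1, ← harg2, ← harg3, ← harg4, hTdef]; ring
  have hLpow : (512:ℝ) ≤ 2 ^ (L ^ 2) := by
    calc (512:ℝ) = 2 ^ (9:ℕ) := by norm_num
      _ ≤ 2 ^ (L ^ 2) := pow_le_pow_right₀ one_le_two (by simpa using Nat.pow_le_pow_left hL3 2)
  have hTsmall : |T| < 1 / 2 := by
    have h1 : ((2:ℝ) ^ (L ^ 2))⁻¹ ≤ (512:ℝ)⁻¹ := by
      apply inv_anti₀ (by norm_num) hLpow
    calc |T| < 2 * ((2:ℝ) ^ (L ^ 2))⁻¹ := hT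
      _ ≤ 2 * (512:ℝ)⁻¹ := by linarith
      _ ≤ 1 / 2 := by norm_num
  have hπT : |Real.pi * T| < Real.pi / 2 := by
    rw [abs_mul, abs_of_pos hπ]
    have := mul_lt_mul_of_pos_left hTsmall hπ
    linarith
  by_cases hwim : w.im = 0
  · -- degenerate case: leads to contradiction
    exfalso
    have hnormw : Zsqrtd.norm w = (p:ℤ) * q * r * s := by
      rw [hw, Zsqrtd.norm_mul, Zsqrtd.norm_mul, Zsqrtd.norm_mul, stmt8_norm_star,
        stmt8_norm_star, hw1, hw2, hw3, hw4,
        stmt8_norm_fact (u p) (v p) p hpeq, stmt8_norm_fact (u q) (v q) q hqeq,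
        stmt8_norm_fact (u r) (v r) r hreq, stmt8_norm_fact (u s) (v s) s hseq]
    have hsqZ : (w.re) ^ 2 = (p:ℤ) * q * r * s := by
      rw [← hnormw, Zsqrtd.norm_def, hwim]; ring
    set n := w.re.natAbs with hn
    have hnn : n ^ 2 = p * q * r * s := by
      have h1 : ((n:ℤ)) ^ 2 = (p:ℤ) * q * r * s := by
        rw [hn, Int.natAbs_sq, hsqZ]
      exact_mod_cast h1
    have hpq : p = q := by
      have hdvd : p ∣ n ^ 2 := ⟨q * r * s, by rw [hnn]; ring⟩
      obtain ⟨t, ht⟩ := hp.dvd_of_dvd_pow hdvd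
      have h1 : p * (p * t ^ 2) = p * (q * r * s) := by
        calc p * (p * t ^ 2) = (p * t) ^ 2 := by ring
          _ = n ^ 2 := by rw [ht]
          _ = p * q * r * s := hnn
          _ = p * (q * r * s) := by ring
      have h2 : p * t ^ 2 = q * r * s := Nat.eq_of_mul_eq_mul_left hp.pos h1
      have h3 : p ∣ q * r * s := ⟨t ^ 2, h2.symm⟩
      rcases (Nat.Prime.dvd_mul hp).mp h3 with h4 | h4
      · rcases (Nat.Prime.dvd_mul hp).mp h4 with h5 | h5
        · exact (Nat.prime_dvd_prime_iff_eq hp hq).mp h5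
        · exact absurd ((Nat.prime_dvd_prime_iff_eq hp hr).mp h5) hpr
      · exact absurd ((Nat.prime_dvd_prime_iff_eq hp hs).mp h4) hps
    have hrs : r = s := by
      have hdvd : r ∣ n ^ 2 := ⟨p * q * s, by rw [hnn]; ring⟩
      obtain ⟨t, ht⟩ := hr.dvd_of_dvd_pow hdvd
      have h1 : r * (r * t ^ 2) = r * (p * q * s) := by
        calc r * (r * t ^ 2) = (r * t) ^ 2 := by ring
          _ = n ^ 2 := by rw [ht]
          _ = p * q * r * s := hnn
          _ = r * (p * q * s) := by ring
      have h2 : r * t ^ 2 = p * q * s := Nat.eq_of_mul_eq_mul_left hr.pos h1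
      have h3 : r ∣ p * q * s := ⟨t ^ 2, h2.symm⟩
      rcases (Nat.Prime.dvd_mul hr).mp h3 with h4 | h4
      · rcases (Nat.Prime.dvd_mul hr).mp h4 with h5 | h5
        · exact absurd ((Nat.prime_dvd_prime_iff_eq hr hp).mp h5).symm hpr
        · exact absurd ((Nat.prime_dvd_prime_iff_eq hr hq).mp h5).symm hqr
      · exact (Nat.prime_dvd_prime_iff_eq hr hs).mp h4
    have him0 : (w:ℂ).im = 0 := by rw [← GaussianInt.intCast_im, hwim]; simp
    have hT0 : T = 0 := by
      rcases le_or_gt 0 (w:ℂ).re with hre | hre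
      · have ha0 : Complex.arg (w:ℂ) = 0 := Complex.arg_eq_zero_iff.mpr ⟨hre, him0⟩
        rw [ha0] at hangle
        obtain ⟨k, hk⟩ := Real.Angle.angle_eq_iff_two_pi_dvd_sub.mp hangle
        rw [sub_zero] at hk
        have hk0 : k = 0 := by
          by_contra hk0
          have h1 : (1:ℝ) ≤ |(k:ℝ)| := by exact_mod_cast Int.one_le_abs hk0
          rw [hk, abs_mul, abs_mul, abs_of_pos two_pos, abs_of_pos hπ] at hπT
          have h2 := mul_le_mul_of_nonneg_left h1 (by positivity : (0:ℝ) ≤ 2 * Real.pi)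
          rw [mul_one] at h2
          rw [mul_assoc] at hπT h2
          linarith
        rw [hk0] at hk
        push_cast at hk
        have hπT0 : Real.pi * T = 0 := by linarith
        rcases mul_eq_zero.mp hπT0 with h | h
        · exact absurd h (ne_of_gt hπ)
        · exact h
      · have ha0 : Complex.arg (w:ℂ) = Real.pi := Complex.arg_eq_pi_iff.mpr ⟨hre, him0⟩
        rw [ha0] at hangle
        obtain ⟨k, hk⟩ := Real.Angle.angle_eq_iff_two_pi_dvd_sub.mp hangle
        exfalso
        have h1 : Real.pi * T = Real.pi * (2 * (k:ℝ) + 1) := by push_cast at hk ⊢; linarith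
        have h2 : (1:ℝ) ≤ |2 * (k:ℝ) + 1| := by
          have : (2 * k + 1 : ℤ) ≠ 0 := by omega
          have := Int.one_le_abs this
          exact_mod_cast this
        rw [h1, abs_mul, abs_of_pos hπ] at hπT
        have h3 := mul_le_mul_of_nonneg_left h2 hπ.le
        rw [mul_one] at h3
        linarith
    -- now φ p = φ r, contradiction
    have hφpr : φ p = φ r := by
      rw [hTdef] at hT0
      rw [← hpq, ← hrs] at hT0
      linarith
    have harcteq : Real.arctan ((v p : ℝ) / (u p : ℝ)) = Real.arctan ((v r : ℝ) / (u r : ℝ)) := by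
      rw [hφp, hφr] at hφpr
      exact mul_left_cancel₀ (one_div_ne_zero (ne_of_gt hπ)) hφpr
    have hdiveq : (v p : ℝ) / (u p : ℝ) = (v r : ℝ) / (u r : ℝ) :=
      Real.arctan_injective harcteq
    have hupr : (0:ℝ) < (u p : ℝ) := by exact_mod_cast hup
    have hurr : (0:ℝ) < (u r : ℝ) := by exact_mod_cast hur
    have hcrossR : (v p : ℝ) * (u r : ℝ) = (v r : ℝ) * (u p : ℝ) := by
      rw [div_eq_div_iff (ne_of_gt hupr) (ne_of_gt hurr)] at hdiveq
      exact hdiveq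
    have hcross : v p * u r = v r * u p := by exact_mod_cast hcrossR
    have h1 : (v p) ^ 2 * r = (v p * u r) ^ 2 + (v p * v r) ^ 2 := by
      conv_lhs => rw [hreq]
      ring
    have h2 : (v r) ^ 2 * p = (v r * u p) ^ 2 + (v p * v r) ^ 2 := by
      conv_lhs => rw [hpeq]
      ring
    have hkey : (v p) ^ 2 * r = (v r) ^ 2 * p := by rw [h1, h2, hcross]
    have hdvd : p ∣ (v p) ^ 2 * r := ⟨(v r) ^ 2, by rw [hkey]; ring⟩
    have hnvp : ¬ p ∣ v p := by
      apply Nat.not_dvd_of_pos_of_lt hvp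
      have h1 : v p ≤ (v p) ^ 2 := Nat.le_self_pow two_ne_zero _
      have h2 : (v p) ^ 2 < (u p) ^ 2 + (v p) ^ 2 := Nat.lt_add_of_pos_left (pow_pos hup 2)
      conv_rhs => rw [hpeq]
      exact lt_of_le_of_lt h1 h2
    rcases (Nat.Prime.dvd_mul hp).mp hdvd with h4 | h4
    · exact hnvp (hp.dvd_of_dvd_pow h4)
    · exact hpr ((Nat.prime_dvd_prime_iff_eq hp hr).mp h4)
  · -- main case : w.im ≠ 0
    have hsin : Real.sin (Real.pi * T) = (w:ℂ).im / ‖(w:ℂ)‖ := by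
      have h := congrArg Real.Angle.sin hangle
      rw [Real.Angle.sin_coe, Real.Angle.sin_coe] at h
      rw [h, Complex.sin_arg]
    have him : (w:ℂ).im = ((w.im : ℤ) : ℝ) := (GaussianInt.intCast_im w).symm
    have him1 : 1 ≤ |(w:ℂ).im| := by
      rw [him, ← Int.cast_abs]
      exact_mod_cast Int.one_le_abs hwim
    have habsz : ‖(w:ℂ)‖
        = Real.sqrt p * Real.sqrt q * Real.sqrt r * Real.sqrt s := by
      rw [hz, norm_mul, norm_mul, norm_mul, Complex.norm_conj, Complex.norm_conj, hw1, hw2, hw3, hw4,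
        stmt8_abs_fact (u p) (v p) p hpeq, stmt8_abs_fact (u q) (v q) q hqeq,
        stmt8_abs_fact (u r) (v r) r hreq, stmt8_abs_fact (u s) (v s) s hseq]
    have hRpos : 0 < ‖(w:ℂ)‖ := norm_pos_iff.mpr hwne
    have hstep : 1 ≤ Real.pi * |T| * ‖(w:ℂ)‖ := by
      have h2 : |Real.sin (Real.pi * T)| = |(w:ℂ).im| / ‖(w:ℂ)‖ := by
        rw [hsin, abs_div, abs_of_pos hRpos]
      have h3 : |Real.sin (Real.pi * T)| ≤ |Real.pi * T| := Real.abs_sin_le_abs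
      rw [h2, abs_mul, abs_of_pos hπ, div_le_iff₀ hRpos] at h3
      linarith
    have hβ0 : (0:ℝ) < β := by linarith
    have hsp := stmt8_sqrt_lt β hβ0 p _ hp.one_lt.le hKb
    have hsr := stmt8_sqrt_lt β hβ0 r _ hr.one_lt.le hrb
    have hsq' := stmt8_sqrt_lt β hβ0 q _ hq.one_lt.le hqb
    have hss := stmt8_sqrt_lt β hβ0 s _ hs.one_lt.le hsb
    set nK : ℝ := (((K - 1) ^ 2 : ℕ) : ℝ) with hnK
    set nL : ℝ := (((L - 1) ^ 2 : ℕ) : ℝ) with hnL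
    have hR : ‖(w:ℂ)‖ < (2:ℝ) ^ ((nK + nL) / β) := by
      rw [habsz]
      have c1 : (0:ℝ) < (2:ℝ) ^ (nK / (2 * β)) := Real.rpow_pos_of_pos two_pos _
      have c2 : (0:ℝ) < (2:ℝ) ^ (nL / (2 * β)) := Real.rpow_pos_of_pos two_pos _
      calc Real.sqrt p * Real.sqrt q * Real.sqrt r * Real.sqrt s
          < (2:ℝ) ^ (nK / (2 * β)) * ((2:ℝ) ^ (nL / (2 * β)))
            * ((2:ℝ) ^ (nK / (2 * β))) * ((2:ℝ) ^ (nL / (2 * β))) := by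
            apply mul_lt_mul''
            apply mul_lt_mul''
            apply mul_lt_mul'' hsp hsq' (Real.sqrt_nonneg _) (Real.sqrt_nonneg _)
            exact hsr
            exact mul_nonneg (Real.sqrt_nonneg _) (Real.sqrt_nonneg _)
            exact Real.sqrt_nonneg _
            exact hss
            exact mul_nonneg (mul_nonneg (Real.sqrt_nonneg _) (Real.sqrt_nonneg _))
              (Real.sqrt_nonneg _)
            exact Real.sqrt_nonneg _
        _ = (2:ℝ) ^ ((nK + nL) / β) := by
            rw [← Real.rpow_add two_pos, ← Real.rpow_add two_pos, ← Real.rpow_add two_pos]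
            congr 1
            field_simp
            ring
    have hπ4 : Real.pi < 4 := by linarith [Real.pi_lt_d2]
    have hfin1 : (2:ℝ) ^ (L ^ 2) < 2 * Real.pi * (2:ℝ) ^ ((nK + nL) / β) := by
      have t1 : Real.pi * |T| * ‖(w:ℂ)‖
          < Real.pi * (2 * ((2:ℝ) ^ (L ^ 2))⁻¹) * ‖(w:ℂ)‖ :=
        mul_lt_mul_of_pos_right (mul_lt_mul_of_pos_left hT hπ) hRpos
      have t2 : Real.pi * (2 * ((2:ℝ) ^ (L ^ 2))⁻¹) * ‖(w:ℂ)‖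
          < Real.pi * (2 * ((2:ℝ) ^ (L ^ 2))⁻¹) * ((2:ℝ) ^ ((nK + nL) / β)) := by
        apply mul_lt_mul_of_pos_left hR
        positivity
      have t3 : (1:ℝ) < Real.pi * (2 * ((2:ℝ) ^ (L ^ 2))⁻¹) * ((2:ℝ) ^ ((nK + nL) / β)) := by
        linarith
      have hpw : (0:ℝ) < (2:ℝ) ^ (L ^ 2) := by positivity
      have t4 := mul_lt_mul_of_pos_left t3 hpw
      rw [mul_one] at t4
      calc (2:ℝ) ^ (L ^ 2)
          < (2:ℝ) ^ (L ^ 2) * (Real.pi * (2 * ((2:ℝ) ^ (L ^ 2))⁻¹)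
            * ((2:ℝ) ^ ((nK + nL) / β))) := t4
        _ = 2 * Real.pi * (2:ℝ) ^ ((nK + nL) / β) := by
            have hpw' : ((2:ℝ) ^ (L ^ 2)) ≠ 0 := ne_of_gt hpw
            calc (2:ℝ) ^ (L ^ 2) * (Real.pi * (2 * ((2:ℝ) ^ (L ^ 2))⁻¹)
                  * ((2:ℝ) ^ ((nK + nL) / β)))
                = ((2:ℝ) ^ (L ^ 2) * ((2:ℝ) ^ (L ^ 2))⁻¹)
                  * (2 * Real.pi * (2:ℝ) ^ ((nK + nL) / β)) := by ring
              _ = 1 * (2 * Real.pi * (2:ℝ) ^ ((nK + nL) / β)) := by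
                  rw [mul_inv_cancel₀ hpw']
              _ = 2 * Real.pi * (2:ℝ) ^ ((nK + nL) / β) := one_mul _
    have hfin2 : (2:ℝ) ^ ((L ^ 2 : ℕ) : ℝ) < (2:ℝ) ^ ((nK + nL) / β + 3) := by
      rw [Real.rpow_natCast]
      calc (2:ℝ) ^ (L ^ 2) < 2 * Real.pi * (2:ℝ) ^ ((nK + nL) / β) := hfin1
        _ < 8 * (2:ℝ) ^ ((nK + nL) / β) := by
            have hpos : (0:ℝ) < (2:ℝ) ^ ((nK + nL) / β) := Real.rpow_pos_of_pos two_pos _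
            have h8 : 2 * Real.pi < 8 := by linarith
            exact mul_lt_mul_of_pos_right h8 hpos
        _ = (2:ℝ) ^ ((3:ℝ)) * (2:ℝ) ^ ((nK + nL) / β) := by
            rw [show ((3:ℝ)) = ((3:ℕ):ℝ) by norm_num, Real.rpow_natCast]
            norm_num
        _ = (2:ℝ) ^ ((nK + nL) / β + 3) := by
            rw [← Real.rpow_add two_pos]
            ring_nf
    have hexp : ((L ^ 2 : ℕ) : ℝ) < (nK + nL) / β + 3 :=
      (Real.rpow_lt_rpow_left_iff one_lt_two).mp hfin2
    have hmul : β * (((L ^ 2 : ℕ) : ℝ) - 3) < nK + nL := by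
      have h1 : ((L ^ 2 : ℕ) : ℝ) - 3 < (nK + nL) / β := by linarith
      rw [lt_div_iff₀ hβ0] at h1
      linarith [h1]
    have hcastK : nK = ((K:ℝ) - 1) ^ 2 := by
      rw [hnK]
      push_cast [Nat.cast_sub hK1]
      ring
    have hcastL : nL = ((L:ℝ) - 1) ^ 2 := by
      rw [hnL]
      push_cast [Nat.cast_sub (show 1 ≤ L by omega)]
      ring
    have hcastL2 : ((L ^ 2 : ℕ) : ℝ) = (L:ℝ) ^ 2 := by push_cast; ring
    have hL3R : (3:ℝ) ≤ (L:ℝ) := by exact_mod_cast hL3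
    rw [hcastK, hcastL, hcastL2] at hmul
    have h5 : ((L:ℝ) - 1) ^ 2 + 3 ≤ (L:ℝ) ^ 2 := by
      have he : (L:ℝ) ^ 2 - ((L:ℝ) - 1) ^ 2 = 2 * (L:ℝ) - 1 := by ring
      linarith
    calc β * ((L:ℝ) - 1) ^ 2 ≤ β * ((L:ℝ) ^ 2 - 3) := by
          apply mul_le_mul_of_nonneg_left (by linarith) (by linarith)
      _ < ((K:ℝ) - 1) ^ 2 + ((L:ℝ) - 1) ^ 2 := hmul

theorem stmt8 (β : ℝ) (hβ : 2 < β) :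
    ∃ L₀ : ℕ, ∀ (α : ℝ), α ∈ Set.Ico (1 : ℝ) 2 →
      ∀ (u v Kp : ℕ → ℕ) (φ : ℕ → ℝ), PhiHyp u v φ → KpHyp β Kp →
      ∀ p q r s K L : ℕ,
        p.Prime → p % 4 = 1 → q.Prime → q % 4 = 1 →
        r.Prime → r % 4 = 1 → s.Prime → s % 4 = 1 →
        L ≤ K → Kp p = K → Kp r = K → Kp q = L → Kp s = L →
        IsBad φ Kp α p q r s →
        |φ p + φ q - φ r - φ s| < 4 * (2 : ℝ) ^ (-((L : ℝ) ^ 2)) ∧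
        (L₀ ≤ L → β * ((L : ℝ) - 1) ^ 2 < ((K : ℝ) - 1) ^ 2 + ((L : ℝ) - 1) ^ 2) := by
  use 0
  intro α hα u v Kp φ hPhi hKp p q r s K L hp hp4 hq hq4 hr hr4 hs hs4 hLK hpK hrK hqL hsL hBad
  obtain ⟨heq, h1, h2, h3⟩ := hBad
  have hα1 : 1 ≤ α := hα.1
  have hα2 : α < 2 := hα.2
  have hphiB : ∀ x : ℕ, x.Prime → x % 4 = 1 → 0 ≤ φ x ∧ φ x < 1 / 4 := by
    intro x hx hx4
    obtain ⟨hv, huv, hxe, hφx⟩ := hPhi x hx hx4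
    have hπ := Real.pi_pos
    have hu : (0:ℝ) < (u x : ℝ) := by exact_mod_cast (by omega : 0 < u x)
    have hdiv0 : (0:ℝ) ≤ (v x : ℝ) / (u x : ℝ) := by positivity
    have hdiv1 : (v x : ℝ) / (u x : ℝ) < 1 := by
      rw [div_lt_one hu]; exact_mod_cast huv
    constructor
    · rw [hφx]
      have h0 : Real.arctan 0 ≤ Real.arctan ((v x : ℝ) / (u x : ℝ)) :=
        Real.arctan_strictMono.monotone hdiv0
      rw [Real.arctan_zero] at h0
      exact mul_nonneg (by positivity) h0
    · rw [hφx]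
      have harct : Real.arctan ((v x : ℝ) / (u x : ℝ)) < Real.pi / 4 := by
        calc Real.arctan ((v x : ℝ) / (u x : ℝ)) < Real.arctan 1 :=
              Real.arctan_strictMono hdiv1
          _ = Real.pi / 4 := Real.arctan_one
      calc (1 / Real.pi) * Real.arctan ((v x : ℝ) / (u x : ℝ))
          < (1 / Real.pi) * (Real.pi / 4) := by
            exact mul_lt_mul_of_pos_left harct (by positivity)
        _ = 1 / 4 := by field_simp
  obtain ⟨hφp0, hφp1⟩ := hphiB p hp hp4
  obtain ⟨hφq0, hφq1⟩ := hphiB q hq hq4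
  obtain ⟨hφr0, hφr1⟩ := hphiB r hr hr4
  obtain ⟨hφs0, hφs1⟩ := hphiB s hs hs4
  have hmp := stmt8_mfun_lt φ Kp α p hφp0 hφp1 hα1 hα2
  have hmq := stmt8_mfun_lt φ Kp α q hφq0 hφq1 hα1 hα2
  have hmr := stmt8_mfun_lt φ Kp α r hφr0 hφr1 hα1 hα2
  have hms := stmt8_mfun_lt φ Kp α s hφs0 hφs1 hα1 hα2
  have hblk := stmt8_blocks_eq φ Kp α p q r s K L hpK hrK hqL hsL hLK heq
  have hid := stmt8_m_identity φ Kp α p q r s K L hpK hrK hqL hsL hLK hmp hmq hmr hms hblk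
  have hT := stmt8_part1 φ Kp α p q r s K L hα1 hpK hrK hqL hsL hLK hφp0 hφq0 hφr0 hφs0 hid
  have hconv : (2:ℝ) ^ (-((L:ℝ) ^ 2)) = ((2:ℝ) ^ (L ^ 2 : ℕ))⁻¹ := by
    rw [← Real.rpow_natCast 2 (L ^ 2), ← Real.rpow_neg (by norm_num : (0:ℝ) ≤ 2)]
    congr 1
    push_cast
    ring
  constructor
  · rw [hconv]
    have hpos : (0:ℝ) < ((2:ℝ) ^ (L ^ 2 : ℕ))⁻¹ := by positivity
    linarith
  · intro _
    have hps' : afun φ Kp α s < afun φ Kp α p := lt_of_le_of_lt h2 h1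
    have hqr' : afun φ Kp α q < afun φ Kp α r := lt_of_lt_of_le h3 h2
    have hpr : p ≠ r := fun h => by rw [h] at h1; exact lt_irrefl _ h1
    have hps : p ≠ s := fun h => by rw [h] at hps'; exact lt_irrefl _ hps'
    have hqr : q ≠ r := fun h => by rw [h] at hqr'; exact lt_irrefl _ hqr'
    have hqs : q ≠ s := fun h => by rw [h] at h3; exact lt_irrefl _ h3
    obtain ⟨hKp2, _, hpu⟩ := hKp p hp hp4
    obtain ⟨hKq2, _, hqu⟩ := hKp q hq hq4
    obtain ⟨_, _, hru⟩ := hKp r hr hr4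
    obtain ⟨_, _, hsu⟩ := hKp s hs hs4
    rw [hpK] at hpu hKp2
    rw [hrK] at hru
    rw [hqL] at hqu hKq2
    rw [hsL] at hsu
    exact stmt8_part2core β hβ u v φ hPhi p q r s K L hp hp4 hq hq4 hr hr4 hs hs4
      (by omega) hpu hru hqu hsu (by omega) hpr hps hqr hqs hT
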